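/- Let m, n ≥ 1, f ∈ ℝ^m, and let B ∈ ℝ^{n×m} be such that M(B) is bounded and is a maximal lattice-free set. Then for every matrix Ā ∈ ℝ^{n×m} there exists δ > 0 such that for all 0 < ε < δ, every integer point contained in M(B + εĀ) is also contained in M(B), i.e., M(B + εĀ) ∩ ℤ^m ⊆ M(B) ∩ ℤ^m. -/

import Mathlib

open Matrix Pointwise

noncomputable section

/-- A point of `ℝ^m` is an integer point if all its coordinates are integers. -/
def IsIntPoint {m : ℕ} (x : Fin m → ℝ) : Prop := ∀ i, ∃ z : ℤ, x i = (z : ℝ)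

/-- A set is lattice-free if its interior contains no integer point. -/
def IsLatticeFree {m : ℕ} (S : Set (Fin m → ℝ)) : Prop :=
  ∀ x ∈ interior S, ¬ IsIntPoint x

/-- `M(B) = {x ∈ ℝ^m | bⁱ · (x - f) ≤ 1 for all rows bⁱ of B}`. -/
def Mset {n m : ℕ} (f : Fin m → ℝ) (B : Matrix (Fin n) (Fin m) ℝ) :
    Set (Fin m → ℝ) :=
  {x | ∀ i, B i ⬝ᵥ (x - f) ≤ 1}

/-- `ψ_B(r) = max_i bⁱ · r` (the Minkowski functional of `M(B)`). -/
def psi {n m : ℕ} (B : Matrix (Fin n) (Fin m) ℝ) (r : Fin m → ℝ) : ℝ :=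
  ⨆ i, B i ⬝ᵥ r

/-- `γ(B) = (ψ_B(r^1), …, ψ_B(r^k))`. -/
def gammaVec {n k : ℕ} (r : Fin k → Fin 2 → ℝ) (B : Matrix (Fin n) (Fin 2) ℝ) :
    Fin k → ℝ :=
  fun j => psi B (r j)

/-- The nonnegative orthant `ℝ^k_+`. -/
def orthant (k : ℕ) : Set (Fin k → ℝ) := {x | ∀ i, 0 ≤ x i}

/-- `Δ = {γ(B) | B ∈ ℝ^{3×2}, M(B) lattice-free}`. -/
def Delta {k : ℕ} (f : Fin 2 → ℝ) (r : Fin k → Fin 2 → ℝ) : Set (Fin k → ℝ) :=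
  {g | ∃ B : Matrix (Fin 3) (Fin 2) ℝ, IsLatticeFree (Mset f B) ∧ g = gammaVec r B}

/-- `Δ' = cl(conv Δ) + ℝ^k_+` (Minkowski sum). -/
def Delta' {k : ℕ} (f : Fin 2 → ℝ) (r : Fin k → Fin 2 → ℝ) : Set (Fin k → ℝ) :=
  closure (convexHull ℝ (Delta f r)) + orthant k

/-- The triangle closure `T = {s ∈ ℝ^k_+ | γ · s ≥ 1 for all γ ∈ Δ}`. -/
def Tset {k : ℕ} (f : Fin 2 → ℝ) (r : Fin k → Fin 2 → ℝ) : Set (Fin k → ℝ) :=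
  {s | s ∈ orthant k ∧ ∀ g ∈ Delta f r, 1 ≤ g ⬝ᵥ s}

/-- `x` is an extreme point of `K`: `x ∈ K` and `x` is not the midpoint of two
points of `K` both different from `x`. -/
def IsExtremePt {E : Type*} [AddCommGroup E] [Module ℝ E] (K : Set E) (x : E) : Prop :=
  x ∈ K ∧ ¬ ∃ y₁ ∈ K, ∃ y₂ ∈ K, y₁ ≠ x ∧ y₂ ≠ x ∧ x = (2⁻¹ : ℝ) • (y₁ + y₂)

/-- A vector is rational if all its coordinates are rational. -/
def IsRatVec {m : ℕ} (x : Fin m → ℝ) : Prop := ∀ i, ∃ q : ℚ, x i = (q : ℝ)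

/-- A maximal lattice-free convex set. -/
def IsMaxLatticeFree {m : ℕ} (S : Set (Fin m → ℝ)) : Prop :=
  Convex ℝ S ∧ IsLatticeFree S ∧
    ∀ S' : Set (Fin m → ℝ), Convex ℝ S' → IsLatticeFree S' → S ⊆ S' → S' = S

/-- if `M(B)` is a bounded maximal lattice-free set, then for every
matrix `Ā` there is `δ > 0` with `M(B + εĀ) ∩ ℤ^m ⊆ M(B) ∩ ℤ^m` for all `0 < ε < δ`. -/
theorem stmt7 (m n : ℕ) (hm : 1 ≤ m) (hn : 1 ≤ n) (f : Fin m → ℝ)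
    (B : Matrix (Fin n) (Fin m) ℝ)
    (hbdd : Bornology.IsBounded (Mset f B))
    (hmax : IsMaxLatticeFree (Mset f B))
    (A : Matrix (Fin n) (Fin m) ℝ) :
    ∃ δ > (0 : ℝ), ∀ ε : ℝ, 0 < ε → ε < δ →
      ∀ x : Fin m → ℝ, IsIntPoint x → x ∈ Mset f (B + ε • A) → x ∈ Mset f B := by
  haveI : Nonempty (Fin n) := ⟨⟨0, hn⟩⟩
  haveI : Nonempty (Fin m) := ⟨⟨0, hm⟩⟩
  haveI : Nontrivial (Fin m → ℝ) :=
    ⟨0, (fun _ => 1), fun h => by simpa using congrFun h ⟨0, hm⟩⟩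
  have hle : ∀ (r : Fin m → ℝ) (i : Fin n), B i ⬝ᵥ r ≤ psi B r := fun r i =>
    le_ciSup (f := fun i => B i ⬝ᵥ r) (Set.Finite.bddAbove (Set.finite_range _)) i
  -- positivity of psi on nonzero vectors
  have hpos : ∀ r : Fin m → ℝ, r ≠ 0 → 0 < psi B r := by
    intro r hr
    by_contra h
    push_neg at h
    have hall : ∀ i, B i ⬝ᵥ r ≤ 0 := fun i => (hle r i).trans h
    obtain ⟨R, hR⟩ := hbdd.subset_closedBall 0
    have hrn : 0 < ‖r‖ := norm_pos_iff.mpr hr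
    set t : ℝ := (|R| + ‖f‖ + 1) / ‖r‖ with ht
    have htpos : 0 < t := by positivity
    have hmem : f + t • r ∈ Mset f B := by
      intro i
      have : B i ⬝ᵥ (f + t • r - f) = t * (B i ⬝ᵥ r) := by
        rw [add_sub_cancel_left, dotProduct_smul, smul_eq_mul]
      rw [this]
      nlinarith [hall i]
    have hball := hR hmem
    rw [Metric.mem_closedBall, dist_zero_right] at hball
    have h1 : ‖t • r‖ ≤ ‖f + t • r‖ + ‖f‖ := by
      calc ‖t • r‖ = ‖(f + t • r) - f‖ := by rw [add_sub_cancel_left]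
        _ ≤ ‖f + t • r‖ + ‖f‖ := norm_sub_le _ _
    have h2 : ‖t • r‖ = t * ‖r‖ := by
      rw [norm_smul, Real.norm_eq_abs, abs_of_pos htpos]
    have h3 : t * ‖r‖ = |R| + ‖f‖ + 1 := by
      rw [ht]; field_simp
    nlinarith [abs_nonneg R, le_abs_self R, norm_nonneg f]
  -- continuity of psi
  have hcont : Continuous (psi B) := by
    have h : psi B = fun r => Finset.univ.sup' Finset.univ_nonempty (fun i => B i ⬝ᵥ r) := by
      funext r; rw [Finset.sup'_univ_eq_ciSup]; rfl
    rw [h]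
    exact Continuous.finset_sup'_apply Finset.univ_nonempty fun i _ => by
      unfold dotProduct
      exact continuous_finset_sum _ fun j _ => (continuous_const.mul (continuous_apply j))
  -- min on sphere
  obtain ⟨r0, hr0mem, hr0min⟩ := (isCompact_sphere (0 : Fin m → ℝ) 1).exists_isMinOn
    (NormedSpace.sphere_nonempty.mpr zero_le_one) hcont.continuousOn
  set c : ℝ := psi B r0 with hc
  have hr0norm : ‖r0‖ = 1 := mem_sphere_zero_iff_norm.mp hr0mem
  have hcpos : 0 < c := hpos r0 (by intro h; rw [h] at hr0norm; simp at hr0norm)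
  -- scaling lower bound: c * ‖r‖ ≤ psi B r
  have hlow : ∀ r : Fin m → ℝ, c * ‖r‖ ≤ psi B r := by
    intro r
    rcases eq_or_ne r 0 with rfl | hr
    · simp only [norm_zero, mul_zero]
      have : psi B 0 = 0 := by unfold psi; simp
      rw [this]
    · have hrn : 0 < ‖r‖ := norm_pos_iff.mpr hr
      have hu : (‖r‖⁻¹ • r) ∈ Metric.sphere (0 : Fin m → ℝ) 1 := by
        rw [mem_sphere_zero_iff_norm, norm_smul, Real.norm_eq_abs,
          abs_of_pos (inv_pos.mpr hrn), inv_mul_cancel₀ hrn.ne']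
      have h1 : c ≤ psi B (‖r‖⁻¹ • r) := hr0min hu
      have h2 : psi B (‖r‖⁻¹ • r) = ‖r‖⁻¹ * psi B r := by
        unfold psi
        have : ∀ i, B i ⬝ᵥ (‖r‖⁻¹ • r) = ‖r‖⁻¹ * (B i ⬝ᵥ r) := fun i => by
          rw [dotProduct_smul, smul_eq_mul]
        simp_rw [this]
        exact (Real.mul_iSup_of_nonneg (inv_nonneg.mpr hrn.le) _).symm
      rw [h2] at h1
      have h3 := mul_le_mul_of_nonneg_right h1 hrn.le
      calc c * ‖r‖ ≤ ‖r‖⁻¹ * psi B r * ‖r‖ := h3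
        _ = psi B r := by field_simp
  -- bound on A rows
  set CA : ℝ := ⨆ i, ∑ j, |A i j| with hCA
  have hCAle : ∀ i, (∑ j, |A i j|) ≤ CA := fun i =>
    le_ciSup (f := fun i => ∑ j, |A i j|) (Set.Finite.bddAbove (Set.finite_range _)) i
  have hCAnn : 0 ≤ CA :=
    le_trans (Finset.sum_nonneg fun j _ => abs_nonneg _) (hCAle (Classical.arbitrary _))
  have hAbd : ∀ (i : Fin n) (r : Fin m → ℝ), |A i ⬝ᵥ r| ≤ CA * ‖r‖ := by
    intro i r
    calc |A i ⬝ᵥ r| ≤ ∑ j, |A i j * r j| := Finset.abs_sum_le_sum_abs _ _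
      _ ≤ ∑ j, |A i j| * ‖r‖ := by
          refine Finset.sum_le_sum fun j _ => ?_
          rw [abs_mul]
          exact mul_le_mul_of_nonneg_left (norm_le_pi_norm r j) (abs_nonneg _)
      _ = (∑ j, |A i j|) * ‖r‖ := (Finset.sum_mul _ _ _).symm
      _ ≤ CA * ‖r‖ := mul_le_mul_of_nonneg_right (hCAle i) (norm_nonneg r)
  -- uniform boundedness of perturbed sets
  set δ₀ : ℝ := c / (2 * (CA + 1)) with hδ₀
  have hδ₀pos : 0 < δ₀ := by positivity
  set R0 : ℝ := 2 / c with hR0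
  have hunif : ∀ ε : ℝ, 0 < ε → ε < δ₀ → ∀ x ∈ Mset f (B + ε • A), ‖x - f‖ ≤ R0 := by
    intro ε hε1 hε2 x hx
    set r := x - f with hr
    have hub : ∀ i, B i ⬝ᵥ r ≤ 1 + ε * (CA * ‖r‖) := by
      intro i
      have h1 := hx i
      have h2 : (B + ε • A) i ⬝ᵥ r = B i ⬝ᵥ r + ε * (A i ⬝ᵥ r) := by
        have he : (B + ε • A) i = B i + ε • (A i) := rfl
        rw [he, add_dotProduct, smul_dotProduct, smul_eq_mul]
      rw [h2] at h1
      nlinarith [hAbd i r, neg_abs_le (A i ⬝ᵥ r)]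
    have hub2 : psi B r ≤ 1 + ε * (CA * ‖r‖) := ciSup_le hub
    have h3 := hlow r
    have h4 : ε * (CA + 1) < c / 2 := by
      have := mul_lt_mul_of_pos_right hε2 (by positivity : (0:ℝ) < CA + 1)
      rw [hδ₀] at this
      calc ε * (CA + 1) < c / (2 * (CA + 1)) * (CA + 1) := this
        _ = c / 2 := by field_simp
    show ‖x - f‖ ≤ 2 / c
    rw [le_div_iff₀ hcpos]
    have P1 := mul_le_mul_of_nonneg_right h4.le (norm_nonneg (x - f))
    have P2 := mul_nonneg hε1.le (norm_nonneg (x - f))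
    have hr' : r = x - f := rfl
    rw [← hr'] at P1 P2 ⊢
    nlinarith [norm_nonneg r]
  -- finiteness of candidate integer points
  set S : Set (Fin m → ℝ) := {x | IsIntPoint x ∧ ‖x - f‖ ≤ R0} with hS
  have hSfin : S.Finite := by
    set C : ℝ := R0 + ‖f‖ with hC
    have hsub : S ⊆ (fun z : Fin m → ℤ => fun i => (z i : ℝ)) ''
        (Set.pi Set.univ fun _ => Set.Icc (-⌈C⌉) ⌈C⌉) := by
      rintro x ⟨hint, hxr⟩
      choose z hz using hint
      refine ⟨z, ?_, by funext i; exact (hz i).symm⟩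
      intro i _
      have h1 : |x i - f i| ≤ R0 := by
        calc |x i - f i| = ‖(x - f) i‖ := by rw [Real.norm_eq_abs]; rfl
          _ ≤ ‖x - f‖ := norm_le_pi_norm _ i
          _ ≤ R0 := hxr
      have h2 : |(z i : ℝ)| ≤ C := by
        rw [← hz i]
        calc |x i| = |x i - f i + f i| := by ring_nf
          _ ≤ |x i - f i| + |f i| := abs_add_le _ _
          _ ≤ R0 + ‖f‖ := add_le_add h1 (by
              rw [← Real.norm_eq_abs]; exact norm_le_pi_norm f i)
      have hC' : C ≤ (⌈C⌉ : ℝ) := Int.le_ceil C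
      rw [abs_le] at h2
      constructor
      · have : -(⌈C⌉ : ℝ) ≤ (z i : ℝ) := by linarith
        exact_mod_cast this
      · have : (z i : ℝ) ≤ (⌈C⌉ : ℝ) := by linarith
        exact_mod_cast this
    exact Set.Finite.subset (Set.Finite.image _
      (Set.Finite.pi fun _ => Set.finite_Icc _ _)) hsub
  -- escape deltas for bad points
  have hesc : ∀ x : Fin m → ℝ, ∃ d > (0:ℝ), x ∈ S → x ∉ Mset f B →
      ∀ ε : ℝ, 0 < ε → ε < d → x ∉ Mset f (B + ε • A) := by
    intro x
    by_cases hxM : x ∉ Mset f B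
    · have hxM' := hxM
      simp only [Mset, Set.mem_setOf_eq, not_forall, not_le] at hxM'
      obtain ⟨i, hi⟩ := hxM'
      refine ⟨(B i ⬝ᵥ (x - f) - 1) / (|A i ⬝ᵥ (x - f)| + 1),
        div_pos (by linarith) (by positivity), ?_⟩
      intro _ _ ε hε1 hε2 hmem
      have h1 := hmem i
      have h2 : (B + ε • A) i ⬝ᵥ (x - f) = B i ⬝ᵥ (x - f) + ε * (A i ⬝ᵥ (x - f)) := by
        have he : (B + ε • A) i = B i + ε • (A i) := rfl
        rw [he, add_dotProduct, smul_dotProduct, smul_eq_mul]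
      rw [h2] at h1
      rw [lt_div_iff₀ (by positivity)] at hε2
      nlinarith [neg_abs_le (A i ⬝ᵥ (x - f)), abs_nonneg (A i ⬝ᵥ (x - f))]
    · exact ⟨1, one_pos, fun _ h => absurd h hxM⟩
  choose d hdpos hd using hesc
  -- combine over the finite set
  set F : Finset ℝ := insert (1:ℝ) (hSfin.toFinset.image d) with hF
  have hFne : F.Nonempty := ⟨1, Finset.mem_insert_self _ _⟩
  set δ₁ : ℝ := F.min' hFne with hδ₁
  have hδ₁pos : 0 < δ₁ := by
    rcases Finset.mem_insert.mp (F.min'_mem hFne) with h | h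
    · rw [hδ₁, h]; exact one_pos
    · obtain ⟨x, _, hx⟩ := Finset.mem_image.mp h
      rw [hδ₁, ← hx]; exact hdpos x
  have hδ₁le : ∀ x ∈ S, δ₁ ≤ d x := by
    intro x hx
    exact F.min'_le _ (Finset.mem_insert_of_mem
      (Finset.mem_image_of_mem d (hSfin.mem_toFinset.mpr hx)))
  refine ⟨min δ₀ δ₁, lt_min hδ₀pos hδ₁pos, ?_⟩
  intro ε hε1 hε2 x hint hxmem
  by_contra hxM
  have hxS : x ∈ S := ⟨hint, hunif ε hε1 (hε2.trans_le (min_le_left _ _)) x hxmem⟩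
  exact hd x hxS hxM ε hε1 (lt_of_lt_of_le hε2 ((min_le_right _ _).trans (hδ₁le x hxS))) hxmem
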